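/- Let (X, ω) be a real symplectic Banach space and H a closed hyperplane of X. Then there exists a closed subspace H' ⊆ H of codimension 1 in H such that (H', ω|_{H'×H'}) is symplectic. -/

import Mathlib

/-- Every closed hyperplane H of a real symplectic Banach space contains
a closed subspace H' of codimension 1 in H which is symplectic for the restricted form. -/
theorem stmt8 {X : Type*} [NormedAddCommGroup X] [NormedSpace ℝ X] [CompleteSpace X]
    (ω : X →L[ℝ] X →L[ℝ] ℝ) (halt : ∀ x y, ω x y = -ω y x)
    (hbij : Function.Bijective ω)
    (g : X →L[ℝ] ℝ) (hg : g ≠ 0) :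
    ∃ H' : Submodule ℝ X, H' ≤ LinearMap.ker (g : X →ₗ[ℝ] ℝ) ∧ IsClosed (H' : Set X) ∧
      Module.finrank ℝ
        (LinearMap.ker (g : X →ₗ[ℝ] ℝ) ⧸ H'.comap (LinearMap.ker (g : X →ₗ[ℝ] ℝ)).subtype) = 1 ∧
      Function.Bijective (fun f : H' => (ω (f : X)).comp H'.subtypeL) := by
  have hzero : ∀ x : X, ω x x = 0 := fun x => by have := halt x x; linarith
  obtain ⟨x₀, hx₀⟩ := hbij.2 g
  obtain ⟨x₁, hgx₁⟩ : ∃ x₁, g x₁ ≠ 0 := by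
    by_contra h
    push_neg at h
    exact hg (ContinuousLinearMap.ext fun x => by simp [h x])
  have hgx₀ : g x₀ = 0 := by rw [← hx₀]; exact hzero x₀
  have hw10 : ω x₁ x₀ = -g x₁ := by rw [halt, hx₀]
  have hw10' : ω x₁ x₀ ≠ 0 := by rw [hw10]; simpa using hgx₁
  set H' : Submodule ℝ X := LinearMap.ker (g : X →ₗ[ℝ] ℝ) ⊓ LinearMap.ker (ω x₁ : X →ₗ[ℝ] ℝ) with hH'
  have hmem : ∀ x, x ∈ H' ↔ g x = 0 ∧ ω x₁ x = 0 := fun x => by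
    simp [hH', Submodule.mem_inf, LinearMap.mem_ker]
  have hle : H' ≤ LinearMap.ker (g : X →ₗ[ℝ] ℝ) := inf_le_left
  -- decomposition of arbitrary y
  have hdec : ∀ y : X, y - (ω x₁ y / ω x₁ x₀) • x₀ - (g y / g x₁) • x₁ ∈ H' := by
    intro y
    rw [hmem]
    constructor
    · rw [map_sub, map_sub, map_smul, map_smul]
      simp only [smul_eq_mul, hgx₀]
      field_simp
      ring
    · rw [map_sub, map_sub, map_smul, map_smul]
      simp only [smul_eq_mul, hzero x₁]
      field_simp
      ring
  refine ⟨H', hle, ?_, ?_, ?_, ?_⟩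
  · -- closed
    have : (H' : Set X) = (LinearMap.ker (g : X →ₗ[ℝ] ℝ) : Set X) ∩ (LinearMap.ker (ω x₁ : X →ₗ[ℝ] ℝ) : Set X) := by
      rw [hH']; rfl
    rw [this]
    exact (ContinuousLinearMap.isClosed_ker g).inter (ContinuousLinearMap.isClosed_ker (ω x₁))
  · -- codimension 1 in ker g
    set f₁ : (LinearMap.ker (g : X →ₗ[ℝ] ℝ) : Submodule ℝ X) →ₗ[ℝ] ℝ :=
      ((ω x₁ : X →L[ℝ] ℝ) : X →ₗ[ℝ] ℝ).comp (LinearMap.ker (g : X →ₗ[ℝ] ℝ)).subtype with hf₁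
    have hker : H'.comap (LinearMap.ker (g : X →ₗ[ℝ] ℝ)).subtype = LinearMap.ker f₁ := by
      ext x
      simp only [Submodule.mem_comap, LinearMap.mem_ker, hf₁, LinearMap.comp_apply,
        Submodule.subtype_apply, ContinuousLinearMap.coe_coe]
      rw [hmem]
      have := x.2
      rw [LinearMap.mem_ker] at this
      simp [this]
    have hsurj : Function.Surjective f₁ := by
      intro c
      refine ⟨(c / ω x₁ x₀) • ⟨x₀, by simpa [LinearMap.mem_ker] using hgx₀⟩, ?_⟩
      simp only [hf₁, map_smul, LinearMap.comp_apply, Submodule.subtype_apply,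
        ContinuousLinearMap.coe_coe, smul_eq_mul]
      field_simp
    rw [hker]
    have e : ((LinearMap.ker (g : X →ₗ[ℝ] ℝ) : Submodule ℝ X) ⧸ LinearMap.ker f₁) ≃ₗ[ℝ] ℝ :=
      f₁.quotKerEquivRange.trans (LinearEquiv.ofTop _ (LinearMap.range_eq_top.mpr hsurj))
    rw [e.finrank_eq, Module.finrank_self]
  · -- injective
    intro u v huv
    have hmemu := (hmem u).1 u.2
    have hmemv := (hmem v).1 v.2
    have key : ∀ y : X, ω (u : X) y = ω (v : X) y := by
      intro y
      have hy := hdec y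
      have heq : ∀ h : X, h ∈ H' → ω (u : X) h = ω (v : X) h := by
        intro h hh
        have := congrFun (congrArg DFunLike.coe huv) (⟨h, hh⟩ : H')
        simpa using this
      have h0u : ω (u : X) x₀ = 0 := by rw [halt, hx₀, hmemu.1, neg_zero]
      have h0v : ω (v : X) x₀ = 0 := by rw [halt, hx₀, hmemv.1, neg_zero]
      have h1u : ω (u : X) x₁ = 0 := by rw [halt, hmemu.2, neg_zero]
      have h1v : ω (v : X) x₁ = 0 := by rw [halt, hmemv.2, neg_zero]
      have expand : ∀ w : X, ω w x₀ = 0 → ω w x₁ = 0 →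
          ω w y = ω w (y - (ω x₁ y / ω x₁ x₀) • x₀ - (g y / g x₁) • x₁) := by
        intro w hw0 hw1
        rw [map_sub, map_sub, map_smul, map_smul]
        simp [hw0, hw1]
      rw [expand _ h0u h1u, expand _ h0v h1v, heq _ hy]
    have : ω (u : X) = ω (v : X) := ContinuousLinearMap.ext key
    exact Subtype.ext (hbij.1 this)
  · -- surjective
    intro φ
    obtain ⟨ψ, hψ, -⟩ := exists_extension_norm_eq (H' : Submodule ℝ X) φ
    obtain ⟨z, hz⟩ := hbij.2 ψ
    set a : ℝ := ω x₁ z / ω x₁ x₀ with ha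
    set b : ℝ := g z / g x₁ with hb
    refine ⟨⟨z - a • x₀ - b • x₁, hdec z⟩, ?_⟩
    ext y
    simp only [ContinuousLinearMap.comp_apply, Submodule.subtypeL_apply]
    have hy := (hmem y).1 y.2
    rw [map_sub, map_sub, map_smul, map_smul]
    simp only [ContinuousLinearMap.coe_smul', Pi.smul_apply, ContinuousLinearMap.sub_apply,
      smul_eq_mul]
    have h0 : ω x₀ (y : X) = 0 := by rw [hx₀]; exact hy.1
    have h1 : ω x₁ (y : X) = 0 := hy.2
    rw [h0, h1, hz, hψ y]
    ring
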